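/- Let X be a Polish space, M an at most countable partition of X into Borel sets, and μ an atomless Borel probability measure on X. Then there exists a Borel isomorphism Φ : X → X × [0,1] such that for every M ∈ M, Φ_*(μ|_M) = (μ|_M) ⊗ λ, where λ is Lebesgue measure on [0,1]. -/

import Mathlib

open MeasureTheory Set Filter Topology

namespace PartitionIso

lemma cdf_level (ρ : Measure ℝ) [IsFiniteMeasure ρ] [NullSingletonClass ρ] (y : ℝ) :
    ρ {x | (ρ (Iic x)).toReal ≤ y} = min (ENNReal.ofReal y) (ρ univ) := by
  set F : ℝ → ℝ := fun x => (ρ (Iic x)).toReal with hFdef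
  have hfin : ∀ x : ℝ, ρ (Iic x) ≠ ⊤ := fun x => measure_ne_top ρ _
  have hofReal : ∀ x, ENNReal.ofReal (F x) = ρ (Iic x) := fun x => ENNReal.ofReal_toReal (hfin x)
  have hmono : Monotone F := fun a b hab =>
    (ENNReal.toReal_le_toReal (hfin a) (hfin b)).mpr (measure_mono (Iic_subset_Iic.mpr hab))
  by_cases hne : {x | F x ≤ y}.Nonempty
  · by_cases hall : ∃ b, y < F b
    · -- main case
      obtain ⟨b, hb⟩ := hall
      have hbdd : BddAbove {x | F x ≤ y} := by
        refine ⟨b, fun x hx => ?_⟩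
        by_contra hbx
        have : F b ≤ F x := hmono (le_of_not_ge hbx)
        have : y < F x := lt_of_lt_of_le hb this
        exact absurd hx (not_le.mpr this)
      set t := sSup {x | F x ≤ y} with ht
      have hsub1 : Iio t ⊆ {x | F x ≤ y} := by
        intro x hx
        obtain ⟨a, ha, hxa⟩ := exists_lt_of_lt_csSup hne hx
        exact le_trans (hmono hxa.le) ha
      have hsub2 : {x | F x ≤ y} ⊆ Iic t := fun x hx => le_csSup hbdd hx
      have hIio : ρ (Iio t) = ρ (Iic t) := measure_congr (Iio_ae_eq_Iic (μ := ρ) (a := t))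
      have hup : ρ (Iio t) ≤ ENNReal.ofReal y := by
        have hUn : Iio t = ⋃ n : ℕ, Iic (t - 1/(n+1)) := by
          ext x
          simp only [mem_Iio, mem_iUnion, mem_Iic]
          constructor
          · intro hx
            obtain ⟨n, hn⟩ := exists_nat_one_div_lt (sub_pos.mpr hx)
            exact ⟨n, by push_cast at hn ⊢; linarith⟩
          · rintro ⟨n, hn⟩
            have : (0:ℝ) < 1/(n+1) := by positivity
            linarith
        rw [hUn, Directed.measure_iUnion]
        · refine iSup_le fun n => ?_
          have hmem : t - 1/(n+1) ∈ {x | F x ≤ y} := by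
            refine hsub1 ?_
            have : (0:ℝ) < 1/(n+1) := by positivity
            simp only [mem_Iio]; linarith
          calc ρ (Iic (t - 1/(n+1))) = ENNReal.ofReal (F (t - 1/(n+1))) := (hofReal _).symm
          _ ≤ ENNReal.ofReal y := ENNReal.ofReal_le_ofReal hmem
        · refine (Monotone.directed_le fun a b hab => Iic_subset_Iic.mpr ?_)
          have h1 : 1/((b:ℝ)+1) ≤ 1/((a:ℝ)+1) := by
            apply one_div_le_one_div_of_le (by positivity)
            exact_mod_cast add_le_add_left (Nat.cast_le.mpr hab) 1
          linarith
      have hlow : ENNReal.ofReal y ≤ ρ (Iic t) := by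
        have hIn : Iic t = ⋂ n : ℕ, Iic (t + 1/(n+1)) := by
          ext x
          simp only [mem_Iic, mem_iInter]
          constructor
          · intro hx n
            have : (0:ℝ) < 1/(n+1) := by positivity
            linarith
          · intro hx
            by_contra hxt
            push_neg at hxt
            obtain ⟨n, hn⟩ := exists_nat_one_div_lt (sub_pos.mpr hxt)
            have := hx n
            push_cast at hn
            linarith
        have htd : Tendsto (fun n : ℕ => ρ (Iic (t + 1/(n+1)))) atTop (𝓝 (ρ (⋂ n : ℕ, Iic (t + 1/(n+1))))) := by
          refine tendsto_measure_iInter_atTop (fun n => measurableSet_Iic.nullMeasurableSet) ?_ ⟨0, hfin _⟩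
          intro a b hab
          refine Iic_subset_Iic.mpr ?_
          have h1 : 1/((b:ℝ)+1) ≤ 1/((a:ℝ)+1) := by
            apply one_div_le_one_div_of_le (by positivity)
            exact_mod_cast add_le_add_left (Nat.cast_le.mpr hab) 1
          linarith
        rw [hIn]
        refine ge_of_tendsto htd (Eventually.of_forall fun n => ?_)
        have hnotA : t + 1/(n+1) ∉ {x | F x ≤ y} := by
          intro hmem
          have := le_csSup hbdd hmem
          have hpos : (0:ℝ) < 1/(n+1) := by positivity
          rw [← ht] at this
          linarith
        have : y < F (t + 1/(n+1)) := lt_of_not_ge hnotA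
        calc ENNReal.ofReal y ≤ ENNReal.ofReal (F (t + 1/(n+1))) := ENNReal.ofReal_le_ofReal this.le
        _ = ρ (Iic (t + 1/(n+1))) := hofReal _
      have hA : ρ {x | F x ≤ y} = ENNReal.ofReal y := by
        refine le_antisymm ?_ ?_
        · exact le_trans (measure_mono hsub2) (by rw [← hIio]; exact hup)
        · exact le_trans hlow (by rw [← hIio]; exact measure_mono hsub1)
      rw [hA, min_eq_left]
      rw [← hA]; exact measure_mono (subset_univ _)
    · -- all x : F x ≤ y
      push_neg at hall
      have huniv : {x | F x ≤ y} = univ := eq_univ_of_forall hall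
      have hT2 : Tendsto (fun n : ℕ => ρ (Iic (n:ℝ))) atTop (𝓝 (ρ (⋃ n : ℕ, Iic (n:ℝ)))) :=
        tendsto_measure_iUnion_atTop (fun a b hab => Iic_subset_Iic.mpr (by exact_mod_cast hab))
      have hUn : (⋃ n : ℕ, Iic (n:ℝ)) = univ := by
        refine eq_univ_of_forall fun x => ?_
        obtain ⟨n, hn⟩ := exists_nat_ge x
        exact mem_iUnion.mpr ⟨n, hn⟩
      rw [hUn] at hT2
      have hle : ρ univ ≤ ENNReal.ofReal y := by
        refine le_of_tendsto hT2 (Eventually.of_forall fun n => ?_)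
        calc ρ (Iic (n:ℝ)) = ENNReal.ofReal (F n) := (hofReal _).symm
        _ ≤ ENNReal.ofReal y := ENNReal.ofReal_le_ofReal (hall _)
      rw [huniv, min_eq_right hle]
  · -- empty
    rw [not_nonempty_iff_eq_empty] at hne
    rw [hne, measure_empty]
    have hy : y ≤ 0 := by
      by_contra hy
      push_neg at hy
      have hT1 : Tendsto (fun n : ℕ => ρ (Iic (-(n:ℝ)))) atTop (𝓝 (ρ (⋂ n : ℕ, Iic (-(n:ℝ))))) := by
        refine tendsto_measure_iInter_atTop (fun n => measurableSet_Iic.nullMeasurableSet)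
          (fun a b hab => Iic_subset_Iic.mpr (by exact_mod_cast neg_le_neg (Nat.cast_le.mpr hab))) ⟨0, hfin _⟩
      have hIn : (⋂ n : ℕ, Iic (-(n:ℝ))) = ∅ := by
        refine eq_empty_of_forall_notMem fun x hx => ?_
        simp only [mem_iInter, mem_Iic] at hx
        obtain ⟨n, hn⟩ := exists_nat_gt (-x)
        have := hx n
        linarith
      rw [hIn, measure_empty] at hT1
      have hFT : Tendsto (fun n : ℕ => F (-(n:ℝ))) atTop (𝓝 0) := by
        have := (ENNReal.tendsto_toReal (by simp : (0:ENNReal) ≠ ⊤)).comp hT1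
        exact this
      obtain ⟨n, hn⟩ := (hFT.eventually_lt_const hy).exists
      exact absurd hn.le (by
        intro h
        exact (eq_empty_iff_forall_notMem.mp hne (-(n:ℝ))) h)
    symm
    rw [min_eq_left (by simp [ENNReal.ofReal_eq_zero.mpr hy]), ENNReal.ofReal_eq_zero.mpr hy]

lemma key (ρ : Measure ℝ) [IsFiniteMeasure ρ] [NullSingletonClass ρ] :
    ∃ F G : ℝ → ℝ, Measurable F ∧ Measurable G ∧
      Measure.map F ρ = volume.restrict (Set.Ioc 0 (ρ Set.univ).toReal) ∧
      ∀ᵐ x ∂ρ, G (F x) = x := by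
  classical
  set c := (ρ univ).toReal with hc
  set F : ℝ → ℝ := fun x => (ρ (Iic x)).toReal with hFdef
  have hfin : ∀ x : ℝ, ρ (Iic x) ≠ ⊤ := fun x => measure_ne_top ρ _
  have hofReal : ∀ x, ENNReal.ofReal (F x) = ρ (Iic x) := fun x => ENNReal.ofReal_toReal (hfin x)
  have hmono : Monotone F := fun a b hab =>
    (ENNReal.toReal_le_toReal (hfin a) (hfin b)).mpr (measure_mono (Iic_subset_Iic.mpr hab))
  have hmeas : Measurable F := hmono.measurable
  have hlevel : ∀ y, ρ {x | F x ≤ y} = min (ENNReal.ofReal y) (ρ univ) := cdf_level ρ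
  have hcuniv : ENNReal.ofReal c = ρ univ := ENNReal.ofReal_toReal (measure_ne_top ρ _)
  -- the pushforward
  have hmap : Measure.map F ρ = volume.restrict (Set.Ioc 0 c) := by
    haveI : IsFiniteMeasure (Measure.map F ρ) :=
      ⟨by rw [Measure.map_apply hmeas MeasurableSet.univ]; exact measure_lt_top ρ _⟩
    refine Measure.ext_of_Iic _ _ fun y => ?_
    rw [Measure.map_apply hmeas measurableSet_Iic, Measure.restrict_apply measurableSet_Iic]
    have hpre : F ⁻¹' (Iic y) = {x | F x ≤ y} := rfl
    rw [hpre, hlevel]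
    have hins : Iic y ∩ Ioc 0 c = Ioc 0 (min y c) := by
      ext z
      simp only [mem_inter_iff, mem_Iic, mem_Ioc, le_min_iff]
      tauto
    rw [hins, Real.volume_Ioc, sub_zero]
    rcases le_total y c with h | h
    · rw [min_eq_left h, min_eq_left (hcuniv ▸ ENNReal.ofReal_le_ofReal h)]
    · rw [min_eq_right h, min_eq_right (hcuniv ▸ ENNReal.ofReal_le_ofReal h), hcuniv]
  -- the bad set
  set Bad : Set ℝ := ⋃ q : ℚ, {x | (q:ℝ) < x ∧ F x ≤ F q} with hBadDef
  have hBadMeas : MeasurableSet Bad := by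
    refine MeasurableSet.iUnion fun q => ?_
    have : {x | (q:ℝ) < x ∧ F x ≤ F q} = Ioi (q:ℝ) ∩ F ⁻¹' (Iic (F q)) := rfl
    rw [this]
    exact measurableSet_Ioi.inter (hmeas measurableSet_Iic)
  have hBadNull : ρ Bad = 0 := by
    refine measure_iUnion_null fun q => ?_
    have hsub : {x | (q:ℝ) < x ∧ F x ≤ F q} ⊆ {x | F x ≤ F q} \ Iic (q:ℝ) :=
      fun x hx => ⟨hx.2, not_le.mpr hx.1⟩
    refine measure_mono_null hsub ?_
    have hd := measure_diff (μ := ρ) (s₁ := {x | F x ≤ F (q:ℝ)}) (s₂ := Iic (q:ℝ))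
      (fun x hx => hmono hx) measurableSet_Iic.nullMeasurableSet (hfin q)
    rw [hd, hlevel, min_eq_left (hofReal q ▸ measure_mono (subset_univ _)), ← hofReal, tsub_self]
  set D : Set ℝ := Badᶜ with hDdef
  have hDmeas : MeasurableSet D := hBadMeas.compl
  have hinj : InjOn F D := by
    have haux : ∀ a b, a ∈ D → b ∈ D → a < b → F a = F b → False := by
      intro a b _ hb hab hfab
      obtain ⟨q, hq1, hq2⟩ := exists_rat_btwn hab
      have h1 : F a ≤ F q := hmono hq1.le
      have h2 : F q ≤ F b := hmono hq2.le
      have : F b ≤ F q := by rw [← hfab] at h2 ⊢; linarith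
      exact hb (mem_iUnion.mpr ⟨q, hq2, this⟩)
    intro a ha b hb hfab
    rcases lt_trichotomy a b with h | h | h
    · exact (haux a b ha hb h hfab).elim
    · exact h
    · exact (haux b a hb ha h hfab.symm).elim
  haveI := hDmeas.standardBorel
  set f : D → ℝ := fun x => F x with hfdef
  have hfm : Measurable f := hmeas.comp measurable_subtype_coe
  have hfi : Function.Injective f := fun a b hab => Subtype.ext (hinj a.2 b.2 hab)
  have hemb : MeasurableEmbedding f := hfm.measurableEmbedding hfi
  set G : ℝ → ℝ := fun y =>
    if h : y ∈ range f then (fun z : range f => ((rangeSplitting f z : D) : ℝ)) ⟨y, h⟩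
    else (fun _ : ↥(range f)ᶜ => (0:ℝ)) ⟨y, h⟩ with hGdef
  have hGmeas : Measurable G :=
    Measurable.dite (measurable_subtype_coe.comp hemb.measurable_rangeSplitting)
      measurable_const hemb.measurableSet_range
  have hGF : ∀ x, x ∈ D → G (F x) = x := by
    intro x hx
    have hmem : F x ∈ range f := ⟨⟨x, hx⟩, rfl⟩
    have h2 : f (rangeSplitting f ⟨F x, hmem⟩) = f ⟨x, hx⟩ := apply_rangeSplitting f ⟨F x, hmem⟩
    have h3 : rangeSplitting f ⟨F x, hmem⟩ = ⟨x, hx⟩ := hfi h2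
    simp only [hGdef, dif_pos hmem, h3]
  refine ⟨F, G, hmeas, hGmeas, hmap, ?_⟩
  have hDae : ∀ᵐ x ∂ρ, x ∈ D := by
    rw [ae_iff]
    have : {x | ¬ x ∈ D} = Bad := by
      ext x; simp [hDdef]
    rwa [this]
  filter_upwards [hDae] with x hx using hGF x hx

lemma shrink (ρ : Measure ℝ) [IsFiniteMeasure ρ] [NullSingletonClass ρ] (z : ℝ) {m : ℝ} (hm : 0 < m)
    {ε : ENNReal} (hε : 0 < ε) :
    ∃ δ : ℝ, 0 < δ ∧ δ < m ∧ ρ (Icc (z - δ) (z + δ)) < ε := by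
  have hIn : (⋂ n : ℕ, Icc (z - 1/(n+1)) (z + 1/(n+1))) = {z} := by
    ext x
    simp only [mem_iInter, mem_Icc, mem_singleton_iff]
    constructor
    · intro h
      by_contra hne
      obtain ⟨n, hn⟩ := exists_nat_one_div_lt (abs_pos.mpr (sub_ne_zero.mpr hne))
      obtain ⟨h1, h2⟩ := h n
      rcases abs_cases (x - z) with ⟨he, _⟩ | ⟨he, _⟩ <;> rw [he] at hn <;> linarith
    · rintro rfl n
      have : (0:ℝ) < 1/(n+1) := by positivity
      constructor <;> linarith
  have htd : Tendsto (fun n : ℕ => ρ (Icc (z - 1/(n+1)) (z + 1/(n+1)))) atTop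
      (𝓝 (ρ (⋂ n : ℕ, Icc (z - 1/(n+1)) (z + 1/(n+1))))) := by
    refine tendsto_measure_iInter_atTop (fun n => measurableSet_Icc.nullMeasurableSet) ?_
      ⟨0, measure_ne_top ρ _⟩
    intro a b hab
    have h1 : 1/((b:ℝ)+1) ≤ 1/((a:ℝ)+1) := by
      apply one_div_le_one_div_of_le (by positivity)
      exact_mod_cast add_le_add_left (Nat.cast_le.mpr hab) 1
    exact Icc_subset_Icc (by linarith) (by linarith)
  rw [hIn, measure_singleton] at htd
  obtain ⟨n₁, hn₁⟩ := Filter.eventually_atTop.mp (htd.eventually_lt_const hε)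
  obtain ⟨n₂, hn₂⟩ := exists_nat_one_div_lt hm
  refine ⟨1/((max n₁ n₂ : ℕ)+1), by positivity, ?_, ?_⟩
  · have h2 : (1:ℝ)/((max n₁ n₂ : ℕ)+1) ≤ 1/((n₂:ℝ)+1) := by
      apply one_div_le_one_div_of_le (by positivity)
      exact_mod_cast add_le_add_left (Nat.cast_le.mpr (le_max_right _ _)) 1
    linarith
  · exact hn₁ (max n₁ n₂) (le_max_left _ _)

lemma split (ρ : Measure ℝ) [IsFiniteMeasure ρ] [NullSingletonClass ρ] {P : Set ℝ}
    (HP : ∀ p ∈ P, ∀ a b : ℝ, a < p → p < b → ρ (Ioo a b ∩ P) ≠ 0)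
    {l r ε : ℝ} (hε : 0 < ε) (hpos : ρ (Ioo l r ∩ P) ≠ 0) :
    ∃ c₀ c₁ : ℝ × ℝ,
      (l < c₀.1 ∧ c₀.1 < c₀.2 ∧ c₀.2 < c₁.1 ∧ c₁.1 < c₁.2 ∧ c₁.2 < r) ∧
      (c₀.2 - c₀.1 < ε ∧ c₁.2 - c₁.1 < ε) ∧
      (ρ (Icc c₀.1 c₀.2) < ENNReal.ofReal ε ∧ ρ (Icc c₁.1 c₁.2) < ENNReal.ofReal ε) ∧
      ρ (Ioo c₀.1 c₀.2 ∩ P) ≠ 0 ∧ ρ (Ioo c₁.1 c₁.2 ∩ P) ≠ 0 := by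
  have hS : ¬ (Ioo l r ∩ P).Countable := fun h => hpos (h.measure_zero ρ)
  have hnt : (Ioo l r ∩ P).Nontrivial := by
    by_contra h
    rw [not_nontrivial_iff] at h
    exact hS h.countable
  obtain ⟨p, hp, q, hq, hpq⟩ := hnt
  wlog hlt : p < q generalizing p q
  · exact this q hq p hp hpq.symm (hpq.lt_or_gt.resolve_left hlt)
  have hεE : (0:ENNReal) < ENNReal.ofReal ε := ENNReal.ofReal_pos.mpr hε
  obtain ⟨δ₀, hδ₀pos, hδ₀lt, hδ₀meas⟩ := shrink ρ p
    (lt_min (lt_min (sub_pos.mpr hp.1.1) (by linarith : (0:ℝ) < (q - p)/2)) (by linarith : 0 < ε/2)) hεE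
  obtain ⟨δ₁, hδ₁pos, hδ₁lt, hδ₁meas⟩ := shrink ρ q
    (lt_min (lt_min (by linarith : (0:ℝ) < (q - p)/2) (sub_pos.mpr hq.1.2)) (by linarith : 0 < ε/2)) hεE
  have hδ₀a := lt_min_iff.mp hδ₀lt
  have hδ₀b := lt_min_iff.mp hδ₀a.1
  have hδ₁a := lt_min_iff.mp hδ₁lt
  have hδ₁b := lt_min_iff.mp hδ₁a.1
  refine ⟨(p - δ₀, p + δ₀), (q - δ₁, q + δ₁), ?_, ?_, ?_, ?_, ?_⟩ <;> dsimp only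
  · exact ⟨by linarith [hδ₀b.1], by linarith, by linarith [hδ₀b.2, hδ₁b.1], by linarith,
      by linarith [hδ₁b.2]⟩
  · exact ⟨by linarith [hδ₀a.2], by linarith [hδ₁a.2]⟩
  · exact ⟨hδ₀meas, hδ₁meas⟩
  · exact HP p hp.2 _ _ (by linarith) (by linarith)
  · exact HP q hq.2 _ _ (by linarith) (by linarith)

lemma exists_uncountable_null (ρ : Measure ℝ) [IsFiniteMeasure ρ] [NullSingletonClass ρ]
    {A : Set ℝ} (hA : MeasurableSet A) (hApos : ρ A ≠ 0) :
    ∃ C : Set ℝ, C ⊆ A ∧ MeasurableSet C ∧ ρ C = 0 ∧ ¬ C.Countable := by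
  classical
  -- a closed positive-measure subset
  obtain ⟨K₀, hK₀A, hK₀closed, hK₀pos⟩ : ∃ K ⊆ A, IsClosed K ∧ ρ K ≠ 0 := by
    obtain ⟨K, hKA, hKc, hK⟩ := hA.exists_isClosed_lt_add (measure_ne_top ρ A)
      (ε := ρ A / 2) (by simp [hApos])
    refine ⟨K, hKA, hKc, fun h0 => ?_⟩
    rw [h0, zero_add] at hK
    exact absurd hK (not_lt.mpr (ENNReal.half_le_self))
  -- remove locally-null part
  set N : Set ℝ := ⋃ p : {p : ℚ × ℚ // ρ (Ioo (p.1:ℝ) (p.2:ℝ) ∩ K₀) = 0},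
    Ioo ((p:ℚ×ℚ).1:ℝ) ((p:ℚ×ℚ).2:ℝ) with hNdef
  have hNopen : IsOpen N := isOpen_iUnion fun p => isOpen_Ioo
  have hNnull : ρ (N ∩ K₀) = 0 := by
    have : N ∩ K₀ = ⋃ p : {p : ℚ × ℚ // ρ (Ioo (p.1:ℝ) (p.2:ℝ) ∩ K₀) = 0},
        (Ioo ((p:ℚ×ℚ).1:ℝ) ((p:ℚ×ℚ).2:ℝ) ∩ K₀) := by
      rw [hNdef, iUnion_inter]
    rw [this]
    exact measure_iUnion_null fun p => p.2
  set P : Set ℝ := K₀ \ N with hPdef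
  have hPclosed : IsClosed P := IsClosed.sdiff hK₀closed hNopen
  have hPpos : ρ P ≠ 0 := by
    have h1 : K₀ \ N = K₀ \ (N ∩ K₀) := by
      rw [Set.diff_inter_self_eq_diff]
    rw [hPdef, h1, measure_diff_null hNnull]
    exact hK₀pos
  have HP : ∀ p ∈ P, ∀ a b : ℝ, a < p → p < b → ρ (Ioo a b ∩ P) ≠ 0 := by
    intro p hp a b hap hpb hcon
    obtain ⟨s, hs1, hs2⟩ := exists_rat_btwn hap
    obtain ⟨t, ht1, ht2⟩ := exists_rat_btwn hpb
    have hsub : Ioo (s:ℝ) (t:ℝ) ∩ K₀ ⊆ (Ioo a b ∩ P) ∪ (N ∩ K₀) := by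
      rintro x ⟨hx1, hx2⟩
      by_cases hxN : x ∈ N
      · exact Or.inr ⟨hxN, hx2⟩
      · exact Or.inl ⟨⟨by linarith [hx1.1], by linarith [hx1.2]⟩, hx2, hxN⟩
    have hstnull : ρ (Ioo (s:ℝ) (t:ℝ) ∩ K₀) = 0 := by
      refine le_antisymm (le_trans (measure_mono hsub) ?_) zero_le
      refine le_trans (measure_union_le _ _) ?_
      rw [hcon, hNnull, add_zero]
    have hpN : p ∈ N := by
      rw [hNdef]
      exact mem_iUnion.mpr ⟨⟨(s, t), hstnull⟩, hs2, ht1⟩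
    exact hp.2 hpN
  -- root interval
  obtain ⟨n₀, hn₀⟩ : ∃ n : ℕ, ρ (Ioo (-(n:ℝ)) (n:ℝ) ∩ P) ≠ 0 := by
    by_contra h
    push_neg at h
    refine hPpos ?_
    have hsub : P ⊆ ⋃ n : ℕ, (Ioo (-(n:ℝ)) (n:ℝ) ∩ P) := by
      intro x hx
      obtain ⟨n, hn⟩ := exists_nat_gt (|x| + 1)
      have := abs_lt.mp (by linarith [abs_nonneg x] : |x| < n)
      exact mem_iUnion.mpr ⟨n, ⟨this.1, this.2⟩, hx⟩
    exact le_antisymm (le_trans (measure_mono hsub) (by rw [measure_iUnion_null h])) zero_le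
  -- the recursive scheme
  have hsplit := fun (v : {p : ℝ × ℝ // ρ (Ioo p.1 p.2 ∩ P) ≠ 0}) (n : ℕ) =>
    split ρ HP (pow_pos (by norm_num : (0:ℝ) < 4⁻¹) (n+1)) v.2
  choose c₀ c₁ hspl using hsplit
  set T : List Bool → {p : ℝ × ℝ // ρ (Ioo p.1 p.2 ∩ P) ≠ 0} := fun s =>
    List.rec ⟨(-(n₀:ℝ), (n₀:ℝ)), hn₀⟩
      (fun b tail ih => if b then ⟨c₁ ih tail.length, (hspl ih tail.length).2.2.2.2⟩
        else ⟨c₀ ih tail.length, (hspl ih tail.length).2.2.2.1⟩) s with hTdef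
  have hTconsT : ∀ (s : List Bool), T (true :: s) = ⟨c₁ (T s) s.length, (hspl (T s) s.length).2.2.2.2⟩ :=
    fun _ => rfl
  have hTconsF : ∀ (s : List Bool), T (false :: s) = ⟨c₀ (T s) s.length, (hspl (T s) s.length).2.2.2.1⟩ :=
    fun _ => rfl
  -- basic interval facts
  have hlr : ∀ s : List Bool, (T s).1.1 < (T s).1.2 := by
    intro s
    have hne := nonempty_of_measure_ne_zero (T s).2
    obtain ⟨x, hx⟩ := hne
    exact lt_trans hx.1.1 hx.1.2
  have hnest : ∀ (b : Bool) (s : List Bool),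
      (T s).1.1 < (T (b :: s)).1.1 ∧ (T (b :: s)).1.2 < (T s).1.2 := by
    intro b s
    have h := (hspl (T s) s.length).1
    cases b
    · rw [hTconsF]; exact ⟨h.1, lt_trans (lt_trans h.2.2.1 h.2.2.2.1) h.2.2.2.2⟩
    · rw [hTconsT]; exact ⟨lt_trans (lt_trans h.1 h.2.1) h.2.2.1, h.2.2.2.2⟩
  have hmeasbound : ∀ (b : Bool) (s : List Bool),
      ρ (Icc (T (b :: s)).1.1 (T (b :: s)).1.2) < ENNReal.ofReal (4⁻¹ ^ (s.length + 1)) ∧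
      (T (b :: s)).1.2 - (T (b :: s)).1.1 < 4⁻¹ ^ (s.length + 1) := by
    intro b s
    have h2 := (hspl (T s) s.length).2.1
    have h3 := (hspl (T s) s.length).2.2.1
    cases b
    · rw [hTconsF]; exact ⟨h3.1, h2.1⟩
    · rw [hTconsT]; exact ⟨h3.2, h2.2⟩
  have hsibling : ∀ s : List Bool, (T (false :: s)).1.2 < (T (true :: s)).1.1 := by
    intro s
    have h := (hspl (T s) s.length).1
    rw [hTconsF, hTconsT]
    exact h.2.2.1
  -- prefixes of branches
  set pre : (ℕ → Bool) → ℕ → List Bool := fun σ n => Nat.rec [] (fun m ih => σ m :: ih) n with hpreDef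
  have hpreS : ∀ σ n, pre σ (n+1) = σ n :: pre σ n := fun _ _ => rfl
  have hprelen : ∀ σ n, (pre σ n).length = n := by
    intro σ n
    induction n with
    | zero => rfl
    | succ m ih => rw [hpreS]; simp [ih]
  have hpre_ofFn : ∀ (σ : ℕ → Bool) (n : ℕ), ∃ v : Fin n → Bool, List.ofFn v = pre σ n := by
    intro σ n
    induction n with
    | zero => exact ⟨fun _ => true, rfl⟩
    | succ m ih =>
      obtain ⟨v, hv⟩ := ih
      refine ⟨Fin.cons (σ m) v, ?_⟩
      rw [List.ofFn_succ, hpreS]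
      simp [hv]
  set l : (ℕ → Bool) → ℕ → ℝ := fun σ n => (T (pre σ n)).1.1 with hldef
  set r : (ℕ → Bool) → ℕ → ℝ := fun σ n => (T (pre σ n)).1.2 with hrdef
  have hlmono : ∀ σ, Monotone (l σ) :=
    fun σ => monotone_nat_of_le_succ fun n => (hnest (σ n) (pre σ n)).1.le
  have hranti : ∀ σ, Antitone (r σ) :=
    fun σ => antitone_nat_of_succ_le fun n => (hnest (σ n) (pre σ n)).2.le
  have hlylr : ∀ σ n m, l σ n ≤ r σ m := by
    intro σ n m
    rcases le_total n m with h | h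
    · exact le_trans (hlmono σ h) (hlr _).le
    · exact le_trans (hlr _).le (hranti σ h)
  set xb : (ℕ → Bool) → ℝ := fun σ => ⨆ n, l σ n with hxbdef
  have hbddl : ∀ σ, BddAbove (range (l σ)) := fun σ => ⟨r σ 0, by rintro _ ⟨n, rfl⟩; exact hlylr σ n 0⟩
  have hxmem : ∀ σ n, xb σ ∈ Icc (l σ n) (r σ n) :=
    fun σ n => ⟨le_ciSup (hbddl σ) n, ciSup_le fun m => hlylr σ m n⟩
  have hpow14 : Tendsto (fun n : ℕ => ((4:ℝ)⁻¹) ^ (n+1)) atTop (𝓝 0) := by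
    have h0 : Tendsto (fun n : ℕ => ((4:ℝ)⁻¹) ^ n) atTop (𝓝 0) :=
      tendsto_pow_atTop_nhds_zero_of_lt_one (by norm_num) (by norm_num)
    exact h0.comp (tendsto_add_atTop_nat 1)
  have hxP : ∀ σ, xb σ ∈ P := by
    intro σ
    have hy : ∀ n, ∃ y, y ∈ Ioo (l σ n) (r σ n) ∩ P := fun n => nonempty_of_measure_ne_zero (T (pre σ n)).2
    choose y hy using hy
    have hdist : ∀ n : ℕ, dist (y (n+1)) (xb σ) ≤ ((4:ℝ)⁻¹) ^ (n+1) := by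
      intro n
      have h1 : y (n+1) ∈ Icc (l σ (n+1)) (r σ (n+1)) := Ioo_subset_Icc_self (hy (n+1)).1
      have h2 := hxmem σ (n+1)
      have h3 : r σ (n+1) - l σ (n+1) < ((4:ℝ)⁻¹) ^ (n+1) := by
        have := (hmeasbound (σ n) (pre σ n)).2
        rwa [hprelen] at this
      exact le_trans (Real.dist_le_of_mem_Icc h1 h2) (by linarith)
    have htendsto : Tendsto (fun n => y (n+1)) atTop (𝓝 (xb σ)) := by
      rw [tendsto_iff_dist_tendsto_zero]
      exact squeeze_zero (fun n => dist_nonneg) hdist hpow14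
    exact hPclosed.mem_of_tendsto htendsto (Eventually.of_forall fun n => (hy (n+1)).2)
  set C : Set ℝ :=
    P ∩ ⋂ n, ⋃ v : Fin n → Bool, Icc (T (List.ofFn v)).1.1 (T (List.ofFn v)).1.2 with hCdef
  have hxC : ∀ σ, xb σ ∈ C := by
    intro σ
    refine ⟨hxP σ, mem_iInter.mpr fun n => ?_⟩
    obtain ⟨v, hv⟩ := hpre_ofFn σ n
    exact mem_iUnion.mpr ⟨v, by rw [hv]; exact hxmem σ n⟩
  have hlow : ∀ (σ : ℕ → Bool) (n : ℕ), xb σ ≤ (T (σ n :: pre σ n)).1.2 := fun σ n => (hxmem σ (n+1)).2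
  have hhigh : ∀ (σ : ℕ → Bool) (n : ℕ), (T (σ n :: pre σ n)).1.1 ≤ xb σ := fun σ n => (hxmem σ (n+1)).1
  have hxinj : Function.Injective xb := by
    intro σ σ' hEq
    by_contra hne
    have hS : {n | σ n ≠ σ' n}.Nonempty := by
      by_contra h
      rw [not_nonempty_iff_eq_empty] at h
      refine hne (funext fun n => ?_)
      by_contra hn
      exact absurd (h ▸ hn : n ∈ (∅ : Set ℕ)) (notMem_empty n)
    set d := sInf {n | σ n ≠ σ' n} with hddef
    have hd : σ d ≠ σ' d := Nat.sInf_mem hS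
    have hagree : ∀ m, m < d → σ m = σ' m := fun m hm => not_not.mp (Nat.notMem_of_lt_sInf hm)
    have hprEq : pre σ d = pre σ' d := by
      have haux : ∀ k, k ≤ d → pre σ k = pre σ' k := by
        intro k hk
        induction k with
        | zero => rfl
        | succ m ih =>
          rw [hpreS, hpreS, ih (le_trans (Nat.le_succ m) hk),
            hagree m (lt_of_lt_of_le (Nat.lt_succ_self m) hk)]
      exact haux d le_rfl
    have hmain : ∀ τ τ' : ℕ → Bool, τ d = false → τ' d = true → pre τ d = pre τ' d → xb τ ≠ xb τ' := by
      intro τ τ' h1 h1' hpq hEq2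
      have h2 : xb τ ≤ (T (false :: pre τ d)).1.2 := by rw [← h1]; exact hlow τ d
      have h3 : (T (true :: pre τ d)).1.1 ≤ xb τ' := by
        rw [hpq, ← h1']
        exact hhigh τ' d
      have h4 := hsibling (pre τ d)
      rw [hEq2] at h2
      linarith
    cases hb : σ d <;> cases hb' : σ' d
    · exact hd (hb.trans hb'.symm)
    · exact hmain σ σ' hb hb' hprEq hEq
    · exact hmain σ' σ hb' hb hprEq.symm hEq.symm
    · exact hd (hb.trans hb'.symm)
  refine ⟨C, fun x hx => hK₀A hx.1.1, ?_, ?_, ?_⟩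
  · exact hPclosed.measurableSet.inter
      (MeasurableSet.iInter fun n => MeasurableSet.iUnion fun v => measurableSet_Icc)
  · -- null
    refine le_antisymm ?_ zero_le
    have hbound : ∀ n : ℕ, ρ C ≤ ENNReal.ofReal (((2:ℝ)⁻¹)^(n+1)) := by
      intro n
      have h1 : C ⊆ ⋃ v : Fin (n+1) → Bool, Icc (T (List.ofFn v)).1.1 (T (List.ofFn v)).1.2 :=
        fun x hx => (mem_iInter.mp hx.2) (n+1)
      refine le_trans (measure_mono h1) (le_trans (measure_iUnion_le _) ?_)
      have h2 : ∀ v : Fin (n+1) → Bool,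
          ρ (Icc (T (List.ofFn v)).1.1 (T (List.ofFn v)).1.2) ≤ ENNReal.ofReal (((4:ℝ)⁻¹)^(n+1)) := by
        intro v
        have h3 := (hmeasbound (v 0) (List.ofFn fun i => v i.succ)).1
        rw [← List.ofFn_succ] at h3
        simpa [List.length_ofFn] using h3.le
      refine le_trans (ENNReal.tsum_le_tsum h2) ?_
      rw [tsum_fintype, Finset.sum_const, Finset.card_univ]
      have hcard : Fintype.card (Fin (n+1) → Bool) = 2^(n+1) := by
        simp [Fintype.card_fun]
      rw [hcard, nsmul_eq_mul]
      have hc1 : ((2^(n+1) : ℕ) : ENNReal) = ENNReal.ofReal ((2^(n+1) : ℕ) : ℝ) :=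
        (ENNReal.ofReal_natCast _).symm
      rw [hc1, ← ENNReal.ofReal_mul (by positivity)]
      refine ENNReal.ofReal_le_ofReal (le_of_eq ?_)
      push_cast
      rw [← mul_pow]
      norm_num
    have htend : Tendsto (fun n : ℕ => ENNReal.ofReal (((2:ℝ)⁻¹)^(n+1))) atTop (𝓝 0) := by
      have h0 : Tendsto (fun n : ℕ => ((2:ℝ)⁻¹)^(n+1)) atTop (𝓝 0) :=
        (tendsto_pow_atTop_nhds_zero_of_lt_one (by norm_num) (by norm_num)).comp
          (tendsto_add_atTop_nat 1)
      have := ENNReal.tendsto_ofReal (a := 0) h0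
      simpa using this
    exact ge_of_tendsto htend (Eventually.of_forall hbound)
  · -- uncountable
    intro hC
    have hr : range xb ⊆ C := by rintro _ ⟨σ, rfl⟩; exact hxC σ
    have hcnt : (range xb).Countable := hC.mono hr
    have hco : Countable (ℕ → Bool) := by
      haveI := hcnt.to_subtype
      exact Countable.of_equiv _ (Equiv.ofInjective xb hxinj).symm
    have hco2 : Countable (Set ℕ) :=
      Countable.of_equiv _ ((Equiv.arrowCongr (Equiv.refl ℕ) Equiv.propEquivBool).symm)
    have h1 : Cardinal.mk (Set ℕ) ≤ Cardinal.aleph0 := Cardinal.mk_le_aleph0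
    have h2 : Cardinal.aleph0 < Cardinal.mk (Set ℕ) := by
      rw [Cardinal.mk_set, Cardinal.mk_nat]
      exact Cardinal.cantor _
    exact absurd h1 (not_le.mpr h2)

lemma unitInterval_singleton_null (t : unitInterval) : (volume : Measure unitInterval) {t} = 0 := by
  have h := MeasurableEmbedding.comap_apply (MeasurableEmbedding.subtype_coe measurableSet_Icc)
    (volume : Measure ℝ) ({t} : Set unitInterval)
  have h2 : (volume : Measure unitInterval) = Measure.comap Subtype.val volume := rfl
  rw [h2, h]
  simp

end PartitionIso

open PartitionIso in
/-- Let `X` be an uncountable Polish space, `𝓜` an at most countable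
partition of `X` into Borel sets, and `μ` an atomless Borel probability measure on `X`.
Then there is a Borel isomorphism `Φ : X → X × [0,1]` with
`Φ_* (μ|M) = (μ|M) ⊗ λ` for every `M ∈ 𝓜`. -/
theorem exists_partition_compatible_borel_isomorphism
    {X : Type*} [TopologicalSpace X] [PolishSpace X] [MeasurableSpace X] [BorelSpace X]
    [Uncountable X]
    (𝓜 : Set (Set X)) (h𝓜count : 𝓜.Countable)
    (h𝓜meas : ∀ M ∈ 𝓜, MeasurableSet M)
    (h𝓜cover : ⋃₀ 𝓜 = Set.univ)
    (h𝓜disj : 𝓜.PairwiseDisjoint id)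
    (μ : Measure X) [IsProbabilityMeasure μ] [NullSingletonClass μ] :
    ∃ Φ : X → X × unitInterval, Measurable Φ ∧ Function.Bijective Φ ∧
      ∀ M ∈ 𝓜, (μ.restrict M).map Φ = (μ.restrict M).prod (volume : Measure unitInterval) := by
  classical
  -- enumerate the partition
  have h𝓜ne : 𝓜.Nonempty := by
    obtain ⟨x⟩ := (inferInstance : Nonempty X)
    have hx : x ∈ ⋃₀ 𝓜 := h𝓜cover ▸ mem_univ x
    obtain ⟨M, hM, _⟩ := hx
    exact ⟨M, hM⟩
  obtain ⟨m, hm⟩ := h𝓜count.exists_eq_range h𝓜ne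
  have hmem : ∀ i, m i ∈ 𝓜 := fun i => hm ▸ mem_range_self i
  have hmmeas : ∀ i, MeasurableSet (m i) := fun i => h𝓜meas _ (hmem i)
  have hcov : ∀ x : X, ∃ i, x ∈ m i := by
    intro x
    have hx : x ∈ ⋃₀ 𝓜 := h𝓜cover ▸ mem_univ x
    obtain ⟨M, hM, hxM⟩ := hx
    rw [hm] at hM
    obtain ⟨i, rfl⟩ := hM
    exact ⟨i, hxM⟩
  -- the index function
  set idx : X → ℕ := fun x => sInf {i | x ∈ m i} with hidxdef
  have hidxmem : ∀ x, x ∈ m (idx x) := fun x => Nat.sInf_mem (hcov x)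
  have hpieceeq : ∀ (M : Set X), M ∈ 𝓜 → ∀ i x, x ∈ M → x ∈ m i → m i = M := by
    intro M hM i x hxM hxi
    by_contra hne
    exact Set.disjoint_left.mp (h𝓜disj (hmem i) hM hne) hxi hxM
  have hidxconst : ∀ (M : Set X), M ∈ 𝓜 → ∀ x, x ∈ M → m (idx x) = M :=
    fun M hM x hx => hpieceeq M hM _ x hx (hidxmem x)
  have hidxeq : ∀ (M : Set X), M ∈ 𝓜 → ∀ x y, x ∈ M → y ∈ M → idx x = idx y := by
    intro M hM x y hx hy
    have hsets : {i | x ∈ m i} = {i | y ∈ m i} := by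
      ext i
      constructor <;> intro hi
      · rw [mem_setOf_eq, hpieceeq M hM i x hx hi]; exact hy
      · rw [mem_setOf_eq, hpieceeq M hM i y hy hi]; exact hx
    simp only [hidxdef, hsets]
  have hidxmeas : Measurable idx := by
    refine measurable_to_countable' fun k => ?_
    have : idx ⁻¹' {k} = m k ∩ ⋂ (j : ℕ) (_ : j < k), (m j)ᶜ := by
      ext x
      simp only [mem_preimage, mem_singleton_iff, mem_inter_iff, mem_iInter, mem_compl_iff]
      constructor
      · rintro rfl
        exact ⟨hidxmem x, fun j hj => Nat.notMem_of_lt_sInf hj⟩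
      · rintro ⟨hk, hlt⟩
        refine le_antisymm (Nat.sInf_le hk) ?_
        by_contra hc
        push_neg at hc
        exact hlt _ hc (hidxmem x)
    rw [this]
    exact (hmmeas k).inter (MeasurableSet.iInter fun j => MeasurableSet.iInter fun _ => (hmmeas j).compl)
  -- Borel isomorphisms with ℝ
  have hXunc : ¬ Countable X := not_countable
  have hRunc : ¬ Countable ℝ := not_countable
  have hXIunc : ¬ Countable (X × unitInterval) := by
    intro h
    have : Countable X := Function.Injective.countable
      (f := fun x : X => (x, (⟨0, le_refl (0:ℝ), by norm_num⟩ : unitInterval)))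
      (fun a b hab => congrArg Prod.fst hab)
    exact hXunc this
  set e : X ≃ᵐ ℝ := PolishSpace.measurableEquivOfNotCountable hXunc hRunc with hedef
  set j : (X × unitInterval) ≃ᵐ ℝ := PolishSpace.measurableEquivOfNotCountable hXIunc hRunc with hjdef
  haveI : NullSingletonClass (volume : Measure unitInterval) := ⟨unitInterval_singleton_null⟩
  -- piece measures
  set ν : ℕ → Measure X := fun i => μ.restrict (m i) with hνdef
  set ρ : ℕ → Measure ℝ := fun i => Measure.map e (ν i) with hρdef
  set τ : ℕ → Measure ℝ := fun i => Measure.map j ((ν i).prod (volume : Measure unitInterval)) with hτdef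
  have hνfin : ∀ i, IsFiniteMeasure (ν i) := fun i => inferInstance
  have hνna : ∀ i, NullSingletonClass (ν i) := fun i => inferInstance
  have hρfin : ∀ i, IsFiniteMeasure (ρ i) := by
    intro i
    refine ⟨?_⟩
    rw [hρdef, Measure.map_apply e.measurable MeasurableSet.univ]
    exact measure_lt_top _ _
  have hρna : ∀ i, NullSingletonClass (ρ i) := by
    intro i
    refine ⟨fun t => ?_⟩
    rw [hρdef, Measure.map_apply e.measurable (measurableSet_singleton t)]
    have hpre : e ⁻¹' {t} = {e.symm t} := by
      ext z
      simp only [mem_preimage, mem_singleton_iff]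
      constructor
      · rintro rfl; simp
      · rintro rfl; simp
    rw [hpre]
    exact measure_singleton _
  have hprodfin : ∀ i, IsFiniteMeasure ((ν i).prod (volume : Measure unitInterval)) :=
    fun i => inferInstance
  have hτfin : ∀ i, IsFiniteMeasure (τ i) := by
    intro i
    refine ⟨?_⟩
    rw [hτdef, Measure.map_apply j.measurable MeasurableSet.univ]
    exact measure_lt_top _ _
  have hτna : ∀ i, NullSingletonClass (τ i) := by
    intro i
    refine ⟨fun t => ?_⟩
    rw [hτdef, Measure.map_apply j.measurable (measurableSet_singleton t)]
    have hpre : j ⁻¹' {t} = {j.symm t} := by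
      ext z
      simp only [mem_preimage, mem_singleton_iff]
      constructor
      · rintro rfl; simp
      · rintro rfl; simp
    rw [hpre]
    have : ({j.symm t} : Set (X × unitInterval)) = {(j.symm t).1} ×ˢ {(j.symm t).2} := by
      rw [Set.singleton_prod_singleton]
    rw [this, Measure.prod_prod, unitInterval_singleton_null, mul_zero]
  -- equal masses
  have hmass : ∀ i, ρ i univ = τ i univ := by
    intro i
    rw [hρdef, hτdef, Measure.map_apply e.measurable MeasurableSet.univ,
      Measure.map_apply j.measurable MeasurableSet.univ]
    simp only [preimage_univ]
    rw [← Set.univ_prod_univ, Measure.prod_prod]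
    simp
  -- apply the key lemma
  have hkeyρ := fun i => @key (ρ i) (hρfin i) (hρna i)
  choose F G hFmeas hGmeas hFmap hGF using hkeyρ
  have hkeyτ := fun i => @key (τ i) (hτfin i) (hτna i)
  choose F' G' hF'meas hG'meas hF'map hG'F using hkeyτ
  have hmapeq : ∀ i, Measure.map (F i) (ρ i) = Measure.map (F' i) (τ i) := by
    intro i
    rw [hFmap i, hF'map i, hmass i]
  -- piecewise maps
  set ψ : ℕ → X → X × unitInterval := fun i x => j.symm (G' i (F i (e x))) with hψdef
  set θ : ℕ → X × unitInterval → X := fun i p => e.symm (G i (F' i (j p))) with hθdef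
  have hψmeas : ∀ i, Measurable (ψ i) :=
    fun i => j.symm.measurable.comp ((hG'meas i).comp ((hFmeas i).comp e.measurable))
  have hθmeas : ∀ i, Measurable (θ i) :=
    fun i => e.symm.measurable.comp ((hGmeas i).comp ((hF'meas i).comp j.measurable))
  -- pushforward identity on each piece
  have hA : ∀ i, Measure.map (ψ i) (ν i) = (ν i).prod (volume : Measure unitInterval) := by
    intro i
    have h3 : Measure.map ((F i) ∘ ⇑e) (ν i) = Measure.map (F' i) (τ i) := by
      rw [← Measure.map_map (hFmeas i) e.measurable]
      have hre : Measure.map (⇑e) (ν i) = ρ i := rfl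
      rw [hre]
      exact hmapeq i
    have h4 : Measure.map (G' i) (Measure.map (F' i) (τ i)) = τ i := by
      rw [Measure.map_map (hG'meas i) (hF'meas i)]
      have h5 : Measure.map ((G' i) ∘ (F' i)) (τ i) = Measure.map id (τ i) :=
        Measure.map_congr (by filter_upwards [hG'F i] with t ht using ht)
      rw [h5, Measure.map_id]
    calc Measure.map (ψ i) (ν i)
        = Measure.map (⇑j.symm) (Measure.map ((G' i) ∘ ((F i) ∘ ⇑e)) (ν i)) := by
          rw [Measure.map_map j.symm.measurable ((hG'meas i).comp ((hFmeas i).comp e.measurable))]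
          rfl
      _ = Measure.map (⇑j.symm) (Measure.map (G' i) (Measure.map ((F i) ∘ ⇑e) (ν i))) := by
          rw [Measure.map_map (hG'meas i) ((hFmeas i).comp e.measurable)]
      _ = Measure.map (⇑j.symm) (τ i) := by rw [h3, h4]
      _ = (ν i).prod (volume : Measure unitInterval) := by
          rw [hτdef]
          exact MeasurableEquiv.map_symm_map j
  -- a.e. left inverse on each piece
  have hB : ∀ i, ∀ᵐ x ∂(ν i), θ i (ψ i x) = x := by
    intro i
    have hset1 : MeasurableSet {t : ℝ | G i (F i t) = t} :=
      MeasureTheory.StronglyMeasurable.measurableSet_eq_fun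
        (((hGmeas i).comp (hFmeas i)).stronglyMeasurable) measurable_id.stronglyMeasurable
    have h1 : ∀ᵐ x ∂(ν i), G i (F i (e x)) = e x := by
      have h2 := hGF i
      rw [hρdef] at h2
      exact (ae_map_iff e.measurable.aemeasurable hset1).mp h2
    have hset2 : MeasurableSet {y : ℝ | F' i (G' i y) = y} :=
      MeasureTheory.StronglyMeasurable.measurableSet_eq_fun
        (((hF'meas i).comp (hG'meas i)).stronglyMeasurable) measurable_id.stronglyMeasurable
    have h4 : ∀ᵐ y ∂(Measure.map (F' i) (τ i)), F' i (G' i y) = y := by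
      rw [ae_map_iff (hF'meas i).aemeasurable hset2]
      filter_upwards [hG'F i] with t ht
      rw [ht]
    have h6 : ∀ᵐ x ∂(ν i), F' i (G' i (F i (e x))) = F i (e x) := by
      have h5 : Measure.map ((F i) ∘ ⇑e) (ν i) = Measure.map (F' i) (τ i) := by
        rw [← Measure.map_map (hFmeas i) e.measurable]
        have hre : Measure.map (⇑e) (ν i) = ρ i := rfl
        rw [hre]
        exact hmapeq i
      have h7 := h4
      rw [← h5, ae_map_iff ((hFmeas i).comp e.measurable).aemeasurable hset2] at h7
      exact h7
    filter_upwards [h1, h6] with x hx1 hx6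
    show θ i (ψ i x) = x
    simp only [hψdef, hθdef, MeasurableEquiv.apply_symm_apply]
    rw [hx6, hx1, MeasurableEquiv.symm_apply_apply]
  -- the global maps
  set Ψ₀ : X → X × unitInterval := fun x => ψ (idx x) x with hΨ₀def
  set Θ : X × unitInterval → X := fun p => θ (idx p.1) p with hΘdef
  have hΨ₀meas : Measurable Ψ₀ := by
    have h1 : Measurable (fun q : X × ℕ => ψ q.2 q.1) :=
      measurable_from_prod_countable_left fun i => hψmeas i
    exact h1.comp (measurable_id.prodMk hidxmeas)
  have hΘmeas : Measurable Θ := by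
    have h1 : Measurable (fun q : (X × unitInterval) × ℕ => θ q.2 q.1) :=
      measurable_from_prod_countable_left fun i => hθmeas i
    exact h1.comp (measurable_id.prodMk (hidxmeas.comp measurable_fst))
  -- pushforward identity for Ψ₀
  have hA' : ∀ M ∈ 𝓜, Measure.map Ψ₀ (μ.restrict M) = (μ.restrict M).prod (volume : Measure unitInterval) := by
    intro M hM
    rcases eq_empty_or_nonempty M with rfl | ⟨x₀, hx₀⟩
    · rw [Measure.restrict_empty, Measure.map_zero]
      ext s hs
      rw [Measure.prod_apply hs]
      simp
    · have hm0 : m (idx x₀) = M := hidxconst M hM x₀ hx₀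
      have hcongr : Ψ₀ =ᵐ[μ.restrict M] ψ (idx x₀) := by
        filter_upwards [ae_restrict_mem (h𝓜meas M hM)] with x hx
        show ψ (idx x) x = ψ (idx x₀) x
        rw [hidxeq M hM x x₀ hx hx₀]
      rw [Measure.map_congr hcongr]
      have hrest : μ.restrict M = ν (idx x₀) := by
        show μ.restrict M = μ.restrict (m (idx x₀))
        rw [hm0]
      rw [hrest, hA (idx x₀)]
  -- global a.e. left inverse
  have hB' : ∀ᵐ x ∂μ, Θ (Ψ₀ x) = x := by
    have hper : ∀ i : ℕ, ∀ᵐ x ∂(ν i), Θ (Ψ₀ x) = x := by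
      intro i
      rcases eq_empty_or_nonempty (m i) with he | ⟨x₀, hx₀⟩
      · have : ν i = 0 := by
          show μ.restrict (m i) = 0
          rw [he, Measure.restrict_empty]
        rw [this]
        simp
      · have hm0 : m (idx x₀) = m i := hidxconst (m i) (hmem i) x₀ hx₀
        have hνeq : ν (idx x₀) = ν i := by
          show μ.restrict (m (idx x₀)) = μ.restrict (m i)
          rw [hm0]
        have hfst : ∀ᵐ x ∂(ν i), (ψ (idx x₀) x).1 ∈ m i := by
          have h7 : ((ν (idx x₀)).prod (volume : Measure unitInterval)) ((m i)ᶜ ×ˢ univ) = 0 := by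
            rw [Measure.prod_prod]
            have : ν (idx x₀) ((m i)ᶜ) = 0 := by
              rw [hνeq]
              show μ.restrict (m i) ((m i)ᶜ) = 0
              rw [Measure.restrict_apply' (hmmeas i), compl_inter_self, measure_empty]
            rw [this, zero_mul]
          have h9 : ν i (ψ (idx x₀) ⁻¹' ((m i)ᶜ ×ˢ univ)) = 0 := by
            rw [← Measure.map_apply (hψmeas (idx x₀)) (((hmmeas i).compl).prod MeasurableSet.univ),
              ← hνeq, hA (idx x₀)]
            exact h7
          rw [ae_iff]
          have hsets : {x | ¬ (ψ (idx x₀) x).1 ∈ m i} = ψ (idx x₀) ⁻¹' ((m i)ᶜ ×ˢ univ) := by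
            ext x
            simp [Set.mem_prod]
          rw [hsets]
          exact h9
        have hBi := hB (idx x₀)
        rw [hνeq] at hBi
        filter_upwards [ae_restrict_mem (hmmeas i), hfst, hBi] with x hx hfstx hbx
        have hidxx : idx x = idx x₀ := hidxeq (m i) (hmem i) x x₀ hx hx₀
        show θ (idx (ψ (idx x) x).1) (ψ (idx x) x) = x
        rw [hidxx]
        rw [hidxeq (m i) (hmem i) _ x₀ hfstx hx₀]
        exact hbx
    rw [ae_iff]
    have hsub : {x | ¬ Θ (Ψ₀ x) = x} ⊆ ⋃ i, ({x | ¬ Θ (Ψ₀ x) = x} ∩ m i) := by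
      intro x hx
      obtain ⟨i, hi⟩ := hcov x
      exact mem_iUnion.mpr ⟨i, hx, hi⟩
    refine measure_mono_null hsub (measure_iUnion_null fun i => ?_)
    have h1 := hper i
    rw [ae_iff] at h1
    have h2 : μ.restrict (m i) {x | ¬ Θ (Ψ₀ x) = x} = 0 := h1
    rw [Measure.restrict_apply' (hmmeas i)] at h2
    exact h2
  -- the conull set where Θ inverts Ψ₀
  letI : TopologicalSpace.MetrizableSpace X := inferInstance
  set E₀ : Set X := {x | Θ (Ψ₀ x) = x} with hE₀def
  have hE₀meas : MeasurableSet E₀ :=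
    MeasureTheory.StronglyMeasurable.measurableSet_eq_fun
      ((hΘmeas.comp hΨ₀meas).stronglyMeasurable) measurable_id.stronglyMeasurable
  have hE₀conull : μ E₀ᶜ = 0 := by
    rw [ae_iff] at hB'
    have : E₀ᶜ = {x | ¬ Θ (Ψ₀ x) = x} := by rw [hE₀def, compl_setOf]
    rw [this]
    exact hB'
  have hE₀pos : μ E₀ ≠ 0 := by
    intro h0
    have h1 : (μ univ : ENNReal) ≤ μ E₀ + μ E₀ᶜ := by
      rw [← union_compl_self E₀]
      exact measure_union_le _ _
    rw [measure_univ, h0, hE₀conull, add_zero] at h1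
    exact absurd h1 (by norm_num)
  have hinjE₀ : InjOn Ψ₀ E₀ := fun a ha b hb hab => by
    have ha' : Θ (Ψ₀ a) = a := ha
    have hb' : Θ (Ψ₀ b) = b := hb
    rw [← ha', ← hb', hab]
  -- an uncountable μ-null subset of E₀
  set ρX : Measure ℝ := Measure.map (⇑e) μ with hρXdef
  have hρXfin : IsFiniteMeasure ρX := by
    refine ⟨?_⟩
    rw [hρXdef, Measure.map_apply e.measurable MeasurableSet.univ]
    exact measure_lt_top _ _
  have hρXna : NullSingletonClass ρX := by
    refine ⟨fun t => ?_⟩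
    rw [hρXdef, Measure.map_apply e.measurable (measurableSet_singleton t)]
    have hpre : ⇑e ⁻¹' {t} = {e.symm t} := by
      ext z
      simp only [mem_preimage, mem_singleton_iff]
      constructor
      · rintro rfl; simp
      · rintro rfl; simp
    rw [hpre]
    exact measure_singleton _
  have hS : MeasurableSet (⇑e.symm ⁻¹' E₀) := e.symm.measurable hE₀meas
  have hSmass : ρX (⇑e.symm ⁻¹' E₀) ≠ 0 := by
    rw [hρXdef, Measure.map_apply e.measurable hS]
    have hpre : ⇑e ⁻¹' (⇑e.symm ⁻¹' E₀) = E₀ := by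
      ext x
      simp
    rw [hpre]
    exact hE₀pos
  obtain ⟨Cs, hCsub, hCmeas, hCnull, hCunc⟩ :=
    @exists_uncountable_null ρX hρXfin hρXna _ hS hSmass
  set U : Set X := ⇑e ⁻¹' Cs with hUdef
  have hUmeas : MeasurableSet U := e.measurable hCmeas
  have hUsub : U ⊆ E₀ := by
    intro x hx
    have h1 := hCsub hx
    simpa using h1
  have hUnull : μ U = 0 := by
    have h1 : ρX Cs = μ U := by
      rw [hρXdef, Measure.map_apply e.measurable hCmeas]
    rw [← h1, hCnull]
  have hUunc : ¬ U.Countable := by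
    intro h
    refine hCunc ?_
    have h2 : Cs = ⇑e.symm ⁻¹' U := by
      rw [hUdef]
      ext t
      simp
    rw [h2]
    exact h.preimage e.symm.injective
  set E : Set X := E₀ \ U with hEdef
  have hEmeas : MeasurableSet E := hE₀meas.diff hUmeas
  have hEc : μ Eᶜ = 0 := by
    have h1 : Eᶜ = E₀ᶜ ∪ U := by
      rw [hEdef]
      ext x
      simp only [mem_compl_iff, mem_diff, mem_union]
      tauto
    rw [h1]
    exact measure_union_null hE₀conull hUnull
  -- the image of E
  haveI := hEmeas.standardBorel
  set fE : E → X × unitInterval := fun x => Ψ₀ (x : X) with hfEdef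
  have hfEmeas : Measurable fE := hΨ₀meas.comp measurable_subtype_coe
  have hfEinj : Function.Injective fE := fun a b hab =>
    Subtype.ext (hinjE₀ (diff_subset a.2) (diff_subset b.2) hab)
  have hembE : MeasurableEmbedding fE := hfEmeas.measurableEmbedding hfEinj
  set B : Set (X × unitInterval) := range fE with hBdef
  have hBmeas : MeasurableSet B := hembE.measurableSet_range
  have hBimage : B = Ψ₀ '' E := by
    rw [hBdef]
    ext p
    constructor
    · rintro ⟨⟨x, hx⟩, rfl⟩
      exact ⟨x, hx, rfl⟩
    · rintro ⟨x, hx, rfl⟩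
      exact ⟨⟨x, hx⟩, rfl⟩
  -- complements are uncountable
  have hEc_unc : ¬ Countable ↥(Eᶜ) := by
    intro h
    refine hUunc ?_
    have hsub : U ⊆ Eᶜ := fun x hx => fun he => he.2 hx
    exact (countable_coe_iff.mp h).mono hsub
  have hBc_unc : ¬ Countable ↥(Bᶜ) := by
    intro h
    have himgsub : Ψ₀ '' U ⊆ Bᶜ := by
      rintro p ⟨x, hxU, rfl⟩ hpB
      rw [hBimage] at hpB
      obtain ⟨y, hyE, hyx⟩ := hpB
      have hyxeq : y = x := hinjE₀ (diff_subset hyE) (hUsub hxU) hyx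
      exact hyE.2 (hyxeq ▸ hxU)
    have himgcnt : (Ψ₀ '' U).Countable := (countable_coe_iff.mp h).mono himgsub
    refine hUunc ?_
    haveI := himgcnt.to_subtype
    have hmapU : ∀ x : U, Ψ₀ (x : X) ∈ Ψ₀ '' U := fun x => ⟨x, x.2, rfl⟩
    have hinj2 : Function.Injective (fun x : U => (⟨Ψ₀ (x : X), hmapU x⟩ : ↥(Ψ₀ '' U))) := by
      intro a b hab
      have h1 := congrArg Subtype.val hab
      exact Subtype.ext (hinjE₀ (hUsub a.2) (hUsub b.2) h1)
    haveI : Countable ↥U := hinj2.countable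
    exact countable_coe_iff.mp this
  haveI := hEmeas.compl.standardBorel
  haveI := hBmeas.compl.standardBorel
  set hEquiv : ↥(Eᶜ) ≃ᵐ ↥(Bᶜ) := PolishSpace.measurableEquivOfNotCountable hEc_unc hBc_unc
    with hEquivdef
  -- the bijection
  set Φ : X → X × unitInterval := fun x =>
    if hx : x ∈ E then (fun z : E => Ψ₀ (z : X)) ⟨x, hx⟩
    else (fun z : ↥(Eᶜ) => ((hEquiv z : ↥(Bᶜ)) : X × unitInterval)) ⟨x, hx⟩ with hΦdef
  have hΦmeas : Measurable Φ :=
    Measurable.dite hfEmeas (measurable_subtype_coe.comp hEquiv.measurable) hEmeas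
  have hΦeq : ∀ x (hx : x ∈ E), Φ x = Ψ₀ x := fun x hx => by
    rw [hΦdef]
    simp only [dif_pos hx]
  have hΦeqc : ∀ x (hx : x ∉ E), Φ x = ((hEquiv ⟨x, hx⟩ : ↥(Bᶜ)) : X × unitInterval) :=
    fun x hx => by
      rw [hΦdef]
      simp only [dif_neg hx]
  have hΦmemB : ∀ x (hx : x ∈ E), Φ x ∈ B := fun x hx => by
    rw [hΦeq x hx, hBimage]
    exact ⟨x, hx, rfl⟩
  have hΦmemBc : ∀ x (hx : x ∉ E), Φ x ∈ Bᶜ := fun x hx => by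
    rw [hΦeqc x hx]
    exact (hEquiv ⟨x, hx⟩).2
  have hΦbij : Function.Bijective Φ := by
    constructor
    · intro a b hab
      by_cases haE : a ∈ E <;> by_cases hbE : b ∈ E
      · rw [hΦeq a haE, hΦeq b hbE] at hab
        exact hinjE₀ (diff_subset haE) (diff_subset hbE) hab
      · exact absurd (hab ▸ hΦmemB a haE) (hΦmemBc b hbE)
      · exact absurd (hab ▸ hΦmemBc a haE) (by simpa using hΦmemB b hbE)
      · rw [hΦeqc a haE, hΦeqc b hbE] at hab
        have h1 := hEquiv.injective (Subtype.ext hab)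
        exact congrArg Subtype.val h1
    · intro p
      by_cases hpB : p ∈ B
      · obtain ⟨⟨x, hxE⟩, hx⟩ := hpB
        exact ⟨x, by rw [hΦeq x hxE]; exact hx⟩
      · refine ⟨((hEquiv.symm ⟨p, hpB⟩ : ↥(Eᶜ)) : X), ?_⟩
        have hz : ((hEquiv.symm ⟨p, hpB⟩ : ↥(Eᶜ)) : X) ∉ E := (hEquiv.symm ⟨p, hpB⟩).2
        rw [hΦeqc _ hz]
        have h1 : (⟨((hEquiv.symm ⟨p, hpB⟩ : ↥(Eᶜ)) : X), hz⟩ : ↥(Eᶜ)) = hEquiv.symm ⟨p, hpB⟩ :=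
          Subtype.ext rfl
        rw [h1, MeasurableEquiv.apply_symm_apply]
  refine ⟨Φ, hΦmeas, hΦbij, ?_⟩
  intro M hM
  have haeE : ∀ᵐ x ∂(μ.restrict M), x ∈ E := by
    rw [ae_iff]
    have h1 : {x | ¬ x ∈ E} = Eᶜ := rfl
    rw [h1, Measure.restrict_apply' (h𝓜meas M hM)]
    exact measure_mono_null inter_subset_left hEc
  have hae : Φ =ᵐ[μ.restrict M] Ψ₀ := by
    filter_upwards [haeE] with x hx using hΦeq x hx
  rw [Measure.map_congr hae]
  exact hA' M hM
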